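/- Let G be a connected graph, I, J subsets of edges with |I| = |J|, and a, b, c, d ∈ E(G)\(I∪J) with S := I∪J∪{a,b,c,d}. Then the first Dodgson identity holds for dual Dodgson polynomials: φ^{Ia,Jb}_S · φ^{Ic,Jd}_S − φ^{Ia,Jd}_S · φ^{Ic,Jb}_S = ± φ^{I,J}_S · φ^{Iac,Jbd}_S, with sign + when (a−c)(b−d) > 0 and − otherwise. -/

import Mathlib

open scoped Classical

noncomputable section

/-- A finite multigraph with edges labelled by `Fin N`, each edge oriented
from its source `s e` to its target `t e`. -/
structure FeynGraph (N : ℕ) where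
  V : Type
  [fV : Fintype V]
  [dV : DecidableEq V]
  s : Fin N → V
  t : Fin N → V

namespace FeynGraph

variable {N : ℕ}

instance (G : FeynGraph N) : Fintype G.V := G.fV
instance (G : FeynGraph N) : DecidableEq G.V := G.dV

/-- The loop number (first Betti number) `h_G = N_G - |V| + 1` of a connected graph. -/
def loopNumber (G : FeynGraph N) : ℕ := N + 1 - Fintype.card G.V

/-- Adjacency of two vertices through an edge of the edge set `S` (ignoring orientation). -/
def Adj (G : FeynGraph N) (S : Finset (Fin N)) (u v : G.V) : Prop :=
  ∃ e ∈ S, (G.s e = u ∧ G.t e = v) ∨ (G.s e = v ∧ G.t e = u)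

/-- The subgraph with edge set `S` (and all vertices) is connected. -/
def ConnectedOn (G : FeynGraph N) (S : Finset (Fin N)) : Prop :=
  ∀ u v : G.V, Relation.ReflTransGen (G.Adj S) u v

def IsConnected (G : FeynGraph N) : Prop := G.ConnectedOn Finset.univ

/-- A spanning tree: a connected spanning subgraph with `|V| - 1` edges. -/
def IsSpanningTree (G : FeynGraph N) (T : Finset (Fin N)) : Prop :=
  G.ConnectedOn T ∧ T.card + 1 = Fintype.card G.V

/-- The dual graph polynomial `φ_G = Σ_{spanning trees T} Π_{e ∈ T} α_e`. -/
def dualPoly (G : FeynGraph N) : MvPolynomial (Fin N) ℤ :=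
  ∑ T ∈ Finset.univ.filter (fun T => G.IsSpanningTree T), ∏ e ∈ T, MvPolynomial.X e

/-- The Kirchhoff graph polynomial `Ψ_G = Σ_{spanning trees T} Π_{e ∉ T} α_e`. -/
def graphPoly (G : FeynGraph N) : MvPolynomial (Fin N) ℤ :=
  ∑ T ∈ Finset.univ.filter (fun T => G.IsSpanningTree T), ∏ e ∈ Tᶜ, MvPolynomial.X e

/-- The boundary map `∂ : ℤ^E → ℤ^V`, `e ↦ (target e) - (source e)`. -/
def bdry (G : FeynGraph N) (x : Fin N → ℤ) : G.V → ℤ := fun v =>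
  ∑ e, x e * ((if G.t e = v then 1 else 0) - (if G.s e = v then 1 else 0))

/-- `c ∈ ℤ^E` is (the pre-image of) an oriented cycle (topological loop):
its support is a cyclically ordered set of edges through distinct vertices,
with entry `+1` or `-1` according to whether the orientation of the edge
agrees with that of the cycle. -/
def IsCycleVector (G : FeynGraph N) (c : Fin N → ℤ) : Prop :=
  ∃ (n : ℕ) (_ : 0 < n) (f : Fin n → Fin N) (g : Fin n → G.V),
    Function.Injective f ∧ Function.Injective g ∧
    (∀ i : Fin n,
      (c (f i) = 1 ∧ G.s (f i) = g i ∧ G.t (f i) = g ⟨(i.val + 1) % n, Nat.mod_lt _ (Nat.lt_of_le_of_lt (Nat.zero_le _) i.isLt)⟩) ∨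
      (c (f i) = -1 ∧ G.t (f i) = g i ∧ G.s (f i) = g ⟨(i.val + 1) % n, Nat.mod_lt _ (Nat.lt_of_le_of_lt (Nat.zero_le _) i.isLt)⟩)) ∧
    (∀ e : Fin N, e ∉ Set.range f → c e = 0)

/-- A basis of small cycles: (i) each `C i` is an oriented cycle, (ii) the `C i`
generate `H_1(G,ℤ) = ker ∂`, and (iii) if `C i + Σ_{j ≠ i} λ_j C j = μ c` with
`c ∈ H_1(G,ℤ)` and `μ ≠ 0`, then `μ = ±1`. -/
def IsSmallCycleBasis (G : FeynGraph N) (C : Fin G.loopNumber → Fin N → ℤ) : Prop :=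
  (∀ i, G.IsCycleVector (C i)) ∧
  (∀ c : Fin N → ℤ, G.bdry c = 0 → c ∈ Submodule.span ℤ (Set.range C)) ∧
  (∀ (i : Fin G.loopNumber) (lam : Fin G.loopNumber → ℤ) (c : Fin N → ℤ) (μ : ℤ),
    G.bdry c = 0 → μ ≠ 0 →
    C i + ∑ j ∈ Finset.univ.erase i, lam j • C j = μ • c → μ = 1 ∨ μ = -1)

/-- `G` has a cycle (closed walk through distinct edges and distinct vertices)
of length `n`. -/
def HasCycleOfLength (G : FeynGraph N) (n : ℕ) : Prop :=
  ∃ (f : Fin n → Fin N) (g : Fin n → G.V),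
    Function.Injective f ∧ Function.Injective g ∧
    ∀ i : Fin n, (G.s (f i) = g i ∧ G.t (f i) = g ⟨(i.val + 1) % n, Nat.mod_lt _ (Nat.lt_of_le_of_lt (Nat.zero_le _) i.isLt)⟩) ∨
      (G.t (f i) = g i ∧ G.s (f i) = g ⟨(i.val + 1) % n, Nat.mod_lt _ (Nat.lt_of_le_of_lt (Nat.zero_le _) i.isLt)⟩)

/-- The matrix `L_G = [[Δ(α), F^t], [-F, 0]]`, where `F` is the cycle-edge
incidence matrix of a basis of small cycles `C`. -/
def LG (G : FeynGraph N) (C : Fin G.loopNumber → Fin N → ℤ) :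
    Matrix (Fin (N + G.loopNumber)) (Fin (N + G.loopNumber)) (MvPolynomial (Fin N) ℤ) :=
  Matrix.reindex finSumFinEquiv finSumFinEquiv
    (Matrix.fromBlocks
      (Matrix.diagonal fun e => MvPolynomial.X e)
      (Matrix.of fun e i => ((C i e : ℤ) : MvPolynomial (Fin N) ℤ))
      (Matrix.of fun i e => ((-(C i e) : ℤ) : MvPolynomial (Fin N) ℤ))
      (0 : Matrix (Fin G.loopNumber) (Fin G.loopNumber) (MvPolynomial (Fin N) ℤ)))

end FeynGraph

/-- The determinant of the minor of `M` obtained by deleting the rows indexed by `I`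
and the columns indexed by `J`, with rows and columns of the minor enumerated in
increasing order (and `0` if the sizes do not match). -/
def minorDet {R : Type} [CommRing R] {m : ℕ}
    (M : Matrix (Fin m) (Fin m) R) (I J : Finset (Fin m)) : R :=
  if h : (Iᶜ : Finset (Fin m)).card = (Jᶜ : Finset (Fin m)).card then
    Matrix.det (Matrix.of fun i j : Fin (Iᶜ : Finset (Fin m)).card =>
      M (((Iᶜ : Finset (Fin m)).orderIsoOfFin rfl i).1)
        (((Jᶜ : Finset (Fin m)).orderIsoOfFin h.symm j).1))
  else 0

namespace FeynGraph

/-- The dual Dodgson polynomial `φ^{I,J}_{G,K} = det L_G(I,J)|_{α_K = 0}`: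
the determinant of `L_G` with the rows labelled by the edges of `I` and the
columns labelled by the edges of `J` deleted, and the variables of `K` set to zero. -/
def dualDodgson {N : ℕ} (G : FeynGraph N) (C : Fin G.loopNumber → Fin N → ℤ)
    (I J K : Finset (Fin N)) : MvPolynomial (Fin N) ℤ :=
  MvPolynomial.aeval
    (fun e => if e ∈ K then (0 : MvPolynomial (Fin N) ℤ) else MvPolynomial.X e)
    (minorDet (G.LG C) (I.image (Fin.castAdd G.loopNumber)) (J.image (Fin.castAdd G.loopNumber)))

/-- Edges `e1 e2 e3` form a triangle on distinct vertices `u v w`, with the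
edges oriented consistently along the triangle. -/
def HasOrientedTriangle (G : FeynGraph N) (e1 e2 e3 : Fin N) : Prop :=
  ∃ u v w : G.V, u ≠ v ∧ v ≠ w ∧ u ≠ w ∧
    G.s e1 = u ∧ G.t e1 = v ∧ G.s e2 = v ∧ G.t e2 = w ∧ G.s e3 = w ∧ G.t e3 = u

/-- Edges `e1 e2 e3 e4` bound a 4-face (a 4-cycle on distinct vertices), with
`e1, e2` adjacent and `e1, e3` opposite, oriented consistently along the face. -/
def HasOrientedQuadFace (G : FeynGraph N) (e1 e2 e3 e4 : Fin N) : Prop :=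
  ∃ p q r s : G.V, p ≠ q ∧ p ≠ r ∧ p ≠ s ∧ q ≠ r ∧ q ≠ s ∧ r ≠ s ∧
    G.s e1 = p ∧ G.t e1 = q ∧ G.s e2 = q ∧ G.t e2 = r ∧
    G.s e3 = r ∧ G.t e3 = s ∧ G.s e4 = s ∧ G.t e4 = p

end FeynGraph

/-- `[f_1,…,f_k]_q`: the number of `F_q`-rational common zeros in `F^n` of a finite
set of integer polynomials (coefficients reduced to the finite field `F`). -/
def countZeros (F : Type) [Field F] [Fintype F] {n : ℕ}
    (S : Finset (MvPolynomial (Fin n) ℤ)) : ℕ :=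
  Nat.card {x : Fin n → F // ∀ p ∈ S, MvPolynomial.aeval x p = 0}

end
section Aux

set_option linter.unusedSectionVars false

open Matrix

section Core
variable {R : Type} [CommRing R]

lemma updateColumn_comm' {n : Type*} [DecidableEq n] {p q : n} (hpq : p ≠ q)
    (A : Matrix n n R) (u v : n → R) :
    (A.updateCol p u).updateCol q v = (A.updateCol q v).updateCol p u := by
  ext r s
  rcases eq_or_ne s q with rfl | h1
  · rw [Matrix.updateCol_apply, Matrix.updateCol_apply, Matrix.updateCol_apply]
    simp [hpq.symm]
  · rcases eq_or_ne s p with rfl | h2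
    · simp [Matrix.updateCol_apply, h1, hpq]
    · simp [Matrix.updateCol_apply, h1, h2]

lemma det_updateColumn_single {n : Type*} [DecidableEq n] [Fintype n]
    (A : Matrix n n R) (l k : n) :
    det (A.updateCol l (Pi.single k (1:R))) = adjugate A l k := by
  have h1 : adjugate Aᵀ k l = (Aᵀ.updateRow l (Pi.single k (1:R))).det := adjugate_apply _ _ _
  have h2 : (adjugate A)ᵀ = adjugate Aᵀ := adjugate_transpose A
  calc det (A.updateCol l (Pi.single k (1:R)))
      = det ((A.updateCol l (Pi.single k (1:R)))ᵀ) := (det_transpose _).symm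
    _ = det (Aᵀ.updateRow l (Pi.single k (1:R))) := by rw [updateRow_transpose]
    _ = adjugate Aᵀ k l := h1.symm
    _ = (adjugate A)ᵀ k l := by rw [h2]
    _ = adjugate A l k := rfl

lemma det_double_update_one {n : Type*} [DecidableEq n] [Fintype n] {j l : n} (hjl : j ≠ l)
    (u v : n → R) :
    det (((1 : Matrix n n R).updateCol j u).updateCol l v)
      = u j * v l - v j * u l := by
  classical
  set C : Matrix n n R := ((1 : Matrix n n R).updateCol j u).updateCol l v with hC
  have hCapp : ∀ p q, C p q = if q = l then v p else if q = j then u p else (1 : Matrix n n R) p q := by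
    intro p q
    simp [hC, Matrix.updateCol_apply]
  have hzero : ∀ σ : Equiv.Perm n, σ ∉ ({1, Equiv.swap j l} : Finset (Equiv.Perm n)) →
      (Equiv.Perm.sign σ : ℤ) * ∏ q, C (σ q) q = 0 := by
    intro σ hσ
    simp only [Finset.mem_insert, Finset.mem_singleton] at hσ
    push_neg at hσ
    obtain ⟨hσ1, hσ2⟩ := hσ
    -- find q ∉ {j,l} with σ q ≠ q
    have : ∃ q, q ≠ j ∧ q ≠ l ∧ σ q ≠ q := by
      by_contra hcon
      push_neg at hcon
      -- σ fixes everything outside {j, l}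
      have hfix : ∀ q, q ≠ j → q ≠ l → σ q = q := fun q h1 h2 => hcon q h1 h2
      have hσj : σ j = j ∨ σ j = l := by
        by_contra h
        push_neg at h
        have := hfix (σ j) h.1 h.2
        exact h.1 (σ.injective this)
      have hσl : σ l = j ∨ σ l = l := by
        by_contra h
        push_neg at h
        have := hfix (σ l) h.1 h.2
        exact h.2 (σ.injective this)
      rcases hσj with hj' | hj' <;> rcases hσl with hl' | hl'
      · exact hjl (σ.injective (hl'.trans hj'.symm)).symm
      · exact hσ1 (Equiv.ext fun q => by
          simp only [Equiv.Perm.one_apply]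
          by_cases h1 : q = j; · rw [h1, hj']
          by_cases h2 : q = l; · rw [h2, hl']
          exact hfix q h1 h2)
      · exact hσ2 (Equiv.ext fun q => by
          by_cases h1 : q = j
          · rw [h1, hj', Equiv.swap_apply_left]
          by_cases h2 : q = l
          · rw [h2, hl', Equiv.swap_apply_right]
          rw [hfix q h1 h2, Equiv.swap_apply_of_ne_of_ne h1 h2])
      · exact hjl (σ.injective (hj'.trans hl'.symm))
    obtain ⟨q, hq1, hq2, hq3⟩ := this
    have : C (σ q) q = 0 := by
      rw [hCapp]
      simp [hq1, hq2, Matrix.one_apply, hq3]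
    exact mul_eq_zero_of_right _ (Finset.prod_eq_zero (Finset.mem_univ q) this)
  have hdet : det C = ∑ σ ∈ ({1, Equiv.swap j l} : Finset (Equiv.Perm n)),
      (Equiv.Perm.sign σ : ℤ) * ∏ q, C (σ q) q := by
    rw [det_apply']
    exact (Finset.sum_subset (Finset.subset_univ _) (fun σ _ hσ => hzero σ hσ)).symm
  have hne : (1 : Equiv.Perm n) ≠ Equiv.swap j l := by
    intro h
    exact hjl (by simpa using (Equiv.swap_eq_one_iff.mp h.symm))
  rw [hdet, Finset.sum_insert (by simpa using hne), Finset.sum_singleton]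
  have hprod1 : ∏ q, C ((1 : Equiv.Perm n) q) q = u j * v l := by
    have : ∀ q ∈ Finset.univ, q ∉ ({j, l} : Finset n) → C q q = 1 := by
      intro q _ hq
      simp only [Finset.mem_insert, Finset.mem_singleton] at hq
      push_neg at hq
      rw [hCapp]
      simp [hq.1, hq.2, Matrix.one_apply]
    have h1 : ∏ q ∈ ({j, l} : Finset n), C q q = ∏ q, C q q :=
      Finset.prod_subset (Finset.subset_univ _) this
    have h2 : ∏ q ∈ ({j, l} : Finset n), C q q = C j j * C l l := by
      rw [Finset.prod_insert (by simpa using hjl), Finset.prod_singleton]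
    have hjj : C j j = u j := by rw [hCapp]; simp [hjl]
    have hll : C l l = v l := by rw [hCapp]; simp
    simp only [Equiv.Perm.one_apply]
    rw [← h1, h2, hjj, hll]
  have hprod2 : ∏ q, C (Equiv.swap j l q) q = v j * u l := by
    have : ∀ q ∈ Finset.univ, q ∉ ({j, l} : Finset n) → C (Equiv.swap j l q) q = 1 := by
      intro q _ hq
      simp only [Finset.mem_insert, Finset.mem_singleton] at hq
      push_neg at hq
      rw [Equiv.swap_apply_of_ne_of_ne hq.1 hq.2, hCapp]
      simp [hq.1, hq.2, Matrix.one_apply]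
    have h1 : ∏ q ∈ ({j, l} : Finset n), C (Equiv.swap j l q) q = ∏ q, C (Equiv.swap j l q) q :=
      Finset.prod_subset (Finset.subset_univ _) this
    have h2 : ∏ q ∈ ({j, l} : Finset n), C (Equiv.swap j l q) q
        = C (Equiv.swap j l j) j * C (Equiv.swap j l l) l := by
      rw [Finset.prod_insert (by simpa using hjl), Finset.prod_singleton]
    rw [← h1, h2, Equiv.swap_apply_left, Equiv.swap_apply_right]
    have hlj : C l j = u l := by rw [hCapp]; simp [hjl]
    have hjl' : C j l = v j := by rw [hCapp]; simp
    rw [hlj, hjl']; ring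
  rw [hprod1, hprod2]
  simp [Equiv.Perm.sign_swap hjl]
  ring

end Core

section Core2
variable {R : Type} [CommRing R]

lemma single_comp_succAbove {m : ℕ} (i : Fin (m+2)) (k₀ : Fin (m+1)) :
    (Pi.single (i.succAbove k₀) (1:R)) ∘ i.succAbove = Pi.single k₀ 1 := by
  funext x
  simp only [Function.comp_apply, Pi.single_apply]
  congr 1
  simp [Fin.succAbove_right_injective.eq_iff]

lemma submatrix_updateColumn_succAbove_ne {m' o' : Type*} {n : ℕ}
    (A : Matrix m' (Fin (n+1)) R) (v : m' → R) (f : o' → m') (j : Fin (n+1)) (l₀ : Fin n) :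
    (A.updateCol (j.succAbove l₀) v).submatrix f j.succAbove
      = (A.submatrix f j.succAbove).updateCol l₀ (v ∘ f) := by
  ext r s
  rcases eq_or_ne s l₀ with rfl | h
  · simp [Matrix.updateCol_apply]
  · simp [Matrix.updateCol_apply, h, Fin.succAbove_right_injective.ne h]

lemma neg_one_pow_succAbove {m : ℕ} (p : Fin (m+2)) (x : Fin (m+1)) :
    (-1:R)^((p.succAbove x : ℕ) + (x:ℕ)) = if p.succAbove x < p then 1 else -1 := by
  rcases lt_or_ge (Fin.castSucc x) p with h | h
  · rw [Fin.succAbove_of_castSucc_lt _ _ h]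
    rw [if_pos h]
    rw [Fin.coe_castSucc, ← two_mul, pow_mul]
    norm_num
  · rw [Fin.succAbove_of_le_castSucc _ _ h]
    rw [if_neg (not_lt.mpr (le_of_lt (lt_of_le_of_lt h (Fin.castSucc_lt_succ (i := x)))))]
    rw [Fin.val_succ]
    rw [show (x:ℕ) + 1 + (x:ℕ) = 2 * (x:ℕ) + 1 by ring, pow_succ, pow_mul]
    norm_num

lemma dodgson_mul {m : ℕ} (M : Matrix (Fin (m+2)) (Fin (m+2)) R)
    (i j : Fin (m+2)) (k₀ l₀ : Fin (m+1)) :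
    M.det * (det (M.submatrix i.succAbove j.succAbove) *
        det (M.submatrix (i.succAbove k₀).succAbove (j.succAbove l₀).succAbove) -
      det (M.submatrix i.succAbove (j.succAbove l₀).succAbove) *
        det (M.submatrix (i.succAbove k₀).succAbove j.succAbove)) =
    M.det * ((if (i < i.succAbove k₀ ↔ j < j.succAbove l₀) then (1:R) else -1) *
      (M.det * det (M.submatrix (i.succAbove ∘ k₀.succAbove) (j.succAbove ∘ l₀.succAbove)))) := by
  set k := i.succAbove k₀ with hk
  set l := j.succAbove l₀ with hl
  have hjl : j ≠ l := Fin.ne_succAbove j l₀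
  have hik : i ≠ k := Fin.ne_succAbove i k₀
  set u : Fin (m+2) → R := fun p => adjugate M p i with hu
  set v : Fin (m+2) → R := fun p => adjugate M p k with hv
  set C : Matrix (Fin (m+2)) (Fin (m+2)) R :=
    ((1 : Matrix (Fin (m+2)) (Fin (m+2)) R).updateCol j u).updateCol l v with hCdef
  -- the four minors
  set d1 := det (M.submatrix i.succAbove j.succAbove) with hd1
  set d2 := det (M.submatrix k.succAbove l.succAbove) with hd2
  set d3 := det (M.submatrix i.succAbove l.succAbove) with hd3
  set d4 := det (M.submatrix k.succAbove j.succAbove) with hd4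
  set dd := det (M.submatrix (i.succAbove ∘ k₀.succAbove) (j.succAbove ∘ l₀.succAbove)) with hdd
  -- M * C
  have hMC : M * C = (M.updateCol j (M.det • (Pi.single i 1 : Fin (m+2) → R))).updateCol l
      (M.det • (Pi.single k 1 : Fin (m+2) → R)) := by
    ext p q
    rw [Matrix.mul_apply]
    by_cases h1 : q = l
    · subst h1
      have hC1 : ∀ r, C r l = adjugate M r k := fun r => by
        rw [hCdef, Matrix.updateCol_self]
      simp_rw [hC1]
      have h2 : ∑ r, M p r * adjugate M r k = (M * adjugate M) p k := (Matrix.mul_apply).symm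
      rw [h2, mul_adjugate M]
      rw [Matrix.updateCol_self]
      simp [Matrix.one_apply, Pi.single_apply]
    · by_cases h2 : q = j
      · have hC1 : ∀ r, C r q = adjugate M r i := fun r => by
          rw [hCdef, Matrix.updateCol_ne h1, h2, Matrix.updateCol_self]
        simp_rw [hC1]
        have h3 : ∑ r, M p r * adjugate M r i = (M * adjugate M) p i := (Matrix.mul_apply).symm
        rw [h3, mul_adjugate M]
        rw [h2, Matrix.updateCol_ne hjl, Matrix.updateCol_self]
        simp [Matrix.one_apply, Pi.single_apply]
      · have hC1 : ∀ r, C r q = (1 : Matrix (Fin (m+2)) (Fin (m+2)) R) r q := fun r => by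
          rw [hCdef, Matrix.updateCol_ne h1, Matrix.updateCol_ne h2]
        simp_rw [hC1]
        have h3 : ∑ r, M p r * (1 : Matrix (Fin (m+2)) (Fin (m+2)) R) r q
            = (M * (1 : Matrix (Fin (m+2)) (Fin (m+2)) R)) p q := (Matrix.mul_apply).symm
        rw [h3, mul_one]
        rw [Matrix.updateCol_ne h1, Matrix.updateCol_ne h2]
  -- det C
  have hadj1 : adjugate M j i = (-1:R)^((i:ℕ)+(j:ℕ)) * d1 :=
    adjugate_fin_succ_eq_det_submatrix M j i
  have hadj2 : adjugate M l k = (-1:R)^((k:ℕ)+(l:ℕ)) * d2 :=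
    adjugate_fin_succ_eq_det_submatrix M l k
  have hadj3 : adjugate M j k = (-1:R)^((k:ℕ)+(j:ℕ)) * d4 :=
    adjugate_fin_succ_eq_det_submatrix M j k
  have hadj4 : adjugate M l i = (-1:R)^((i:ℕ)+(l:ℕ)) * d3 :=
    adjugate_fin_succ_eq_det_submatrix M l i
  have hdetC : C.det = (-1:R)^((i:ℕ)+(j:ℕ)+(k:ℕ)+(l:ℕ)) * (d1 * d2 - d3 * d4) := by
    rw [hCdef, det_double_update_one hjl, hu, hv]
    simp only []
    rw [hadj1, hadj2, hadj3, hadj4]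
    have e1 : (-1:R)^((i:ℕ)+(j:ℕ)) * (-1:R)^((k:ℕ)+(l:ℕ))
        = (-1:R)^((i:ℕ)+(j:ℕ)+(k:ℕ)+(l:ℕ)) := by rw [← pow_add]; congr 1; omega
    have e2 : (-1:R)^((k:ℕ)+(j:ℕ)) * (-1:R)^((i:ℕ)+(l:ℕ))
        = (-1:R)^((i:ℕ)+(j:ℕ)+(k:ℕ)+(l:ℕ)) := by rw [← pow_add]; congr 1; omega
    linear_combination (d1 * d2) * e1 - (d3 * d4) * e2
  -- det (M * C)
  have hdetMC : det (M * C) = M.det * (M.det *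
      ((-1:R)^((i:ℕ)+(j:ℕ)) * ((-1:R)^((k₀:ℕ)+(l₀:ℕ)) * dd))) := by
    rw [hMC]
    rw [show ((M.updateCol j (M.det • (Pi.single i 1 : Fin (m+2) → R))).updateCol l
        (M.det • (Pi.single k 1 : Fin (m+2) → R))).det
      = cramer (M.updateCol j (M.det • (Pi.single i 1 : Fin (m+2) → R)))
          (M.det • (Pi.single k 1 : Fin (m+2) → R)) l from
      (cramer_apply _ _ _).symm]
    rw [LinearMap.map_smul, Pi.smul_apply, smul_eq_mul]
    rw [cramer_apply]
    rw [updateColumn_comm' hjl]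
    rw [show ((M.updateCol l (Pi.single k (1:R))).updateCol j
        (M.det • (Pi.single i 1 : Fin (m+2) → R))).det
      = cramer (M.updateCol l (Pi.single k (1:R)))
          (M.det • (Pi.single i 1 : Fin (m+2) → R)) j from
      (cramer_apply _ _ _).symm]
    rw [LinearMap.map_smul, Pi.smul_apply, smul_eq_mul]
    rw [cramer_apply]
    rw [det_updateColumn_single]
    rw [adjugate_fin_succ_eq_det_submatrix]
    rw [hl]
    rw [submatrix_updateColumn_succAbove_ne M (Pi.single k (1:R)) i.succAbove j l₀]
    rw [hk, single_comp_succAbove]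
    rw [det_updateColumn_single]
    rw [adjugate_fin_succ_eq_det_submatrix]
    rw [Matrix.submatrix_submatrix]
  -- combine
  have hkey : M.det * ((-1:R)^((i:ℕ)+(j:ℕ)+(k:ℕ)+(l:ℕ)) * (d1 * d2 - d3 * d4))
      = M.det * (M.det * ((-1:R)^((i:ℕ)+(j:ℕ)) * ((-1:R)^((k₀:ℕ)+(l₀:ℕ)) * dd))) := by
    rw [← hdetC, ← hdetMC, det_mul]
  -- signs
  have hs1s1 : (-1:R)^((i:ℕ)+(j:ℕ)+(k:ℕ)+(l:ℕ)) * (-1:R)^((i:ℕ)+(j:ℕ)+(k:ℕ)+(l:ℕ)) = 1 := by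
    rw [← pow_add, ← two_mul, pow_mul]
    norm_num
  have hkk : (-1:R)^((k:ℕ)+(k₀:ℕ)) = if k < i then 1 else -1 := by
    rw [hk]; exact neg_one_pow_succAbove i k₀
  have hll : (-1:R)^((l:ℕ)+(l₀:ℕ)) = if l < j then 1 else -1 := by
    rw [hl]; exact neg_one_pow_succAbove j l₀
  have key : (-1:R)^((i:ℕ)+(j:ℕ)+(k:ℕ)+(l:ℕ)) * ((-1:R)^((i:ℕ)+(j:ℕ)) * (-1:R)^((k₀:ℕ)+(l₀:ℕ)))
      = (if k < i then (1:R) else -1) * (if l < j then 1 else -1) := by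
    have step1 : ∀ a b c : ℕ, (-1:R)^a * ((-1:R)^b * (-1:R)^c) = (-1:R)^(a+(b+c)) :=
      fun a b c => by rw [← pow_add, ← pow_add]
    have step2 : ∀ e f g : ℕ, (-1:R)^(2*e + (f+g)) = ((-1:R)^2)^e * ((-1:R)^f * (-1:R)^g) :=
      fun e f g => by rw [pow_add, pow_add, pow_mul]
    calc (-1:R)^((i:ℕ)+(j:ℕ)+(k:ℕ)+(l:ℕ)) * ((-1:R)^((i:ℕ)+(j:ℕ)) * (-1:R)^((k₀:ℕ)+(l₀:ℕ)))
        = (-1:R)^(((i:ℕ)+(j:ℕ)+(k:ℕ)+(l:ℕ)) + (((i:ℕ)+(j:ℕ)) + ((k₀:ℕ)+(l₀:ℕ)))) :=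
          step1 _ _ _
      _ = (-1:R)^(2*((i:ℕ)+(j:ℕ)) + (((k:ℕ)+(k₀:ℕ)) + ((l:ℕ)+(l₀:ℕ)))) := by
          congr 1; omega
      _ = ((-1:R)^2)^((i:ℕ)+(j:ℕ)) * ((-1:R)^((k:ℕ)+(k₀:ℕ)) * (-1:R)^((l:ℕ)+(l₀:ℕ))) :=
          step2 _ _ _
      _ = (-1:R)^((k:ℕ)+(k₀:ℕ)) * (-1:R)^((l:ℕ)+(l₀:ℕ)) := by norm_num
      _ = (if k < i then (1:R) else -1) * (if l < j then 1 else -1) := by rw [hkk, hll]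
  have hcases : (if (i < k ↔ j < l) then (1:R) else -1)
      = (if k < i then (1:R) else -1) * (if l < j then 1 else -1) := by
    have hik' : k < i ↔ ¬ i < k :=
      ⟨fun h => not_lt.mpr h.le, fun h => lt_of_le_of_ne (not_lt.mp h) hik.symm⟩
    have hjl' : l < j ↔ ¬ j < l :=
      ⟨fun h => not_lt.mpr h.le, fun h => lt_of_le_of_ne (not_lt.mp h) hjl.symm⟩
    by_cases h1 : i < k <;> by_cases h2 : j < l <;>
      simp [h1, h2, hik', hjl']
  have hsign : (if (i < k ↔ j < l) then (1:R) else -1)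
      = (-1:R)^((i:ℕ)+(j:ℕ)+(k:ℕ)+(l:ℕ)) * ((-1:R)^((i:ℕ)+(j:ℕ)) * (-1:R)^((k₀:ℕ)+(l₀:ℕ))) :=
    hcases.trans key.symm
  linear_combination ((-1:R)^((i:ℕ)+(j:ℕ)+(k:ℕ)+(l:ℕ))) * hkey
    - (M.det * (d1 * d2 - d3 * d4)) * hs1s1
    - (M.det * M.det * dd) * hsign

end Core2

lemma dodgson_core {R : Type} [CommRing R] {m : ℕ} (M : Matrix (Fin (m+2)) (Fin (m+2)) R)
    (i j : Fin (m+2)) (k₀ l₀ : Fin (m+1)) :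
    det (M.submatrix i.succAbove j.succAbove) *
        det (M.submatrix (i.succAbove k₀).succAbove (j.succAbove l₀).succAbove) -
      det (M.submatrix i.succAbove (j.succAbove l₀).succAbove) *
        det (M.submatrix (i.succAbove k₀).succAbove j.succAbove) =
    (if (i < i.succAbove k₀ ↔ j < j.succAbove l₀) then (1:R) else -1) *
      (M.det * det (M.submatrix (i.succAbove ∘ k₀.succAbove) (j.succAbove ∘ l₀.succAbove))) := by
  classical
  set X : Matrix (Fin (m+2)) (Fin (m+2)) (MvPolynomial (Fin (m+2) × Fin (m+2)) ℤ) :=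
    Matrix.of (fun p q => MvPolynomial.X (p, q)) with hX
  have hXdet : X.det ≠ 0 := by
    intro h
    set ev : MvPolynomial (Fin (m+2) × Fin (m+2)) ℤ →+* ℤ :=
      (MvPolynomial.aeval (fun pq : Fin (m+2) × Fin (m+2) =>
        if pq.1 = pq.2 then (1:ℤ) else 0)).toRingHom with hev
    have h2 := congrArg ev h
    rw [map_zero, RingHom.map_det] at h2
    have hX1 : ev.mapMatrix X = 1 := by
      ext p q
      simp only [RingHom.mapMatrix_apply, Matrix.map_apply, hX, Matrix.of_apply, hev,
        AlgHom.toRingHom_eq_coe, RingHom.coe_coe, MvPolynomial.aeval_X, Matrix.one_apply]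
    rw [hX1, det_one] at h2
    exact one_ne_zero h2
  have hcan := mul_left_cancel₀ hXdet (dodgson_mul X i j k₀ l₀)
  set φ : MvPolynomial (Fin (m+2) × Fin (m+2)) ℤ →+* R :=
    (MvPolynomial.aeval (fun pq : Fin (m+2) × Fin (m+2) => M pq.1 pq.2)).toRingHom with hφ
  have hXM : φ.mapMatrix X = M := by
    ext p q
    simp only [RingHom.mapMatrix_apply, Matrix.map_apply, hX, Matrix.of_apply, hφ,
      AlgHom.toRingHom_eq_coe, RingHom.coe_coe, MvPolynomial.aeval_X]
  have hmap : ∀ {κ : Type} [Fintype κ] [DecidableEq κ] (f g : κ → Fin (m+2)),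
      φ (det (X.submatrix f g)) = det (M.submatrix f g) := by
    intro κ _ _ f g
    rw [RingHom.map_det]
    congr 1
    ext p q
    simp only [RingHom.mapMatrix_apply, Matrix.map_apply, Matrix.submatrix_apply, hX,
      Matrix.of_apply, hφ, AlgHom.toRingHom_eq_coe, RingHom.coe_coe, MvPolynomial.aeval_X]
  have hdet : φ X.det = M.det := by rw [RingHom.map_det, hXM]
  have h3 := congrArg φ hcan
  rw [map_sub, _root_.map_mul, _root_.map_mul, _root_.map_mul, _root_.map_mul, hdet] at h3
  rw [hmap, hmap, hmap, hmap, hmap] at h3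
  have hif : φ (if (i < i.succAbove k₀ ↔ j < j.succAbove l₀) then 1 else -1)
      = (if (i < i.succAbove k₀ ↔ j < j.succAbove l₀) then (1:R) else -1) := by
    split_ifs <;> simp
  rw [hif] at h3
  exact h3

lemma orderEmbOfFin_congr {α : Type*} [LinearOrder α] {s t : Finset α} (hst : s = t) {k : ℕ}
    (h : s.card = k) (x : Fin k) : s.orderEmbOfFin h x = t.orderEmbOfFin (hst ▸ h) x := by
  subst hst; rfl

lemma orderEmbOfFin_erase {α : Type*} [LinearOrder α] [DecidableEq α] {s : Finset α} {k : ℕ}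
    (h : s.card = k + 1) {a : α} (ha : a ∈ s) (h' : (s.erase a).card = k) (x : Fin k) :
    (s.erase a).orderEmbOfFin h' x
      = s.orderEmbOfFin h (((s.orderIsoOfFin h).symm ⟨a, ha⟩).succAbove x) := by
  set p := (s.orderIsoOfFin h).symm ⟨a, ha⟩ with hp
  have hpa : s.orderEmbOfFin h p = a := by
    have h2 : s.orderIsoOfFin h p = ⟨a, ha⟩ := (s.orderIsoOfFin h).apply_symm_apply _
    rw [← Finset.coe_orderIsoOfFin_apply, h2]
  have hmono : StrictMono (fun x : Fin k => s.orderEmbOfFin h (p.succAbove x)) := by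
    exact (s.orderEmbOfFin h).strictMono.comp (Fin.strictMono_succAbove p)
  have hmem : ∀ x : Fin k, s.orderEmbOfFin h (p.succAbove x) ∈ s.erase a := by
    intro x
    refine Finset.mem_erase.mpr ⟨?_, Finset.orderEmbOfFin_mem _ _ _⟩
    intro he
    exact Fin.succAbove_ne p x ((s.orderEmbOfFin h).injective (he.trans hpa.symm))
  exact (congrFun (Finset.orderEmbOfFin_unique h' hmem hmono) x).symm

lemma minorDet_eq {R : Type} [CommRing R] {n k : ℕ} (M : Matrix (Fin n) (Fin n) R)
    (S T : Finset (Fin n)) (hS : Sᶜ.card = k) (hT : Tᶜ.card = k) :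
    minorDet M S T = Matrix.det (Matrix.of fun i j : Fin k =>
      M (Sᶜ.orderEmbOfFin hS i) (Tᶜ.orderEmbOfFin hT j)) := by
  subst hS
  rw [minorDet, dif_pos hT.symm]
  congr 1

lemma minor_dodgson {R : Type} [CommRing R] {n m : ℕ} (M : Matrix (Fin n) (Fin n) R)
    (I J : Finset (Fin n)) (a b c d : Fin n)
    (ha : a ∉ I) (hb : b ∉ J) (hc : c ∉ I) (hd : d ∉ J)
    (hac : a ≠ c) (hbd : b ≠ d)
    (hIc : Iᶜ.card = m + 2) (hJc : Jᶜ.card = m + 2) :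
    minorDet M (insert a I) (insert b J) * minorDet M (insert c I) (insert d J) -
      minorDet M (insert a I) (insert d J) * minorDet M (insert c I) (insert b J) =
    (if (a < c ↔ b < d) then (1:R) else -1) *
      (minorDet M I J * minorDet M (insert c (insert a I)) (insert d (insert b J))) := by
  classical
  have haI : a ∈ Iᶜ := Finset.mem_compl.mpr ha
  have hcI : c ∈ Iᶜ := Finset.mem_compl.mpr hc
  have hbJ : b ∈ Jᶜ := Finset.mem_compl.mpr hb
  have hdJ : d ∈ Jᶜ := Finset.mem_compl.mpr hd
  have hcIa : c ∈ Iᶜ.erase a := Finset.mem_erase.mpr ⟨hac.symm, hcI⟩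
  have hdJb : d ∈ Jᶜ.erase b := Finset.mem_erase.mpr ⟨hbd.symm, hdJ⟩
  have hIa' : (Iᶜ.erase a).card = m + 1 := by
    rw [Finset.card_erase_of_mem haI, hIc]; omega
  have hIc' : (Iᶜ.erase c).card = m + 1 := by
    rw [Finset.card_erase_of_mem hcI, hIc]; omega
  have hJb' : (Jᶜ.erase b).card = m + 1 := by
    rw [Finset.card_erase_of_mem hbJ, hJc]; omega
  have hJd' : (Jᶜ.erase d).card = m + 1 := by
    rw [Finset.card_erase_of_mem hdJ, hJc]; omega
  have hIac' : ((Iᶜ.erase a).erase c).card = m := by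
    rw [Finset.card_erase_of_mem hcIa, hIa']; omega
  have hJbd' : ((Jᶜ.erase b).erase d).card = m := by
    rw [Finset.card_erase_of_mem hdJb, hJb']; omega
  -- compl facts
  have cIa : (insert a I)ᶜ = Iᶜ.erase a := Finset.compl_insert
  have cIc : (insert c I)ᶜ = Iᶜ.erase c := Finset.compl_insert
  have cJb : (insert b J)ᶜ = Jᶜ.erase b := Finset.compl_insert
  have cJd : (insert d J)ᶜ = Jᶜ.erase d := Finset.compl_insert
  have cIac : (insert c (insert a I))ᶜ = (Iᶜ.erase a).erase c := by
    rw [Finset.compl_insert, cIa]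
  have cJbd : (insert d (insert b J))ᶜ = (Jᶜ.erase b).erase d := by
    rw [Finset.compl_insert, cJb]
  have hIa1 : (insert a I)ᶜ.card = m + 1 := by rw [cIa]; exact hIa'
  have hIc1 : (insert c I)ᶜ.card = m + 1 := by rw [cIc]; exact hIc'
  have hJb1 : (insert b J)ᶜ.card = m + 1 := by rw [cJb]; exact hJb'
  have hJd1 : (insert d J)ᶜ.card = m + 1 := by rw [cJd]; exact hJd'
  have hIac1 : (insert c (insert a I))ᶜ.card = m := by rw [cIac]; exact hIac'
  have hJbd1 : (insert d (insert b J))ᶜ.card = m := by rw [cJbd]; exact hJbd'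
  -- positions
  set pa := (Iᶜ.orderIsoOfFin hIc).symm ⟨a, haI⟩ with hpa
  set pc := (Iᶜ.orderIsoOfFin hIc).symm ⟨c, hcI⟩ with hpc
  set pb := (Jᶜ.orderIsoOfFin hJc).symm ⟨b, hbJ⟩ with hpb
  set pd := (Jᶜ.orderIsoOfFin hJc).symm ⟨d, hdJ⟩ with hpd
  set k₀ := ((Iᶜ.erase a).orderIsoOfFin hIa').symm ⟨c, hcIa⟩ with hk₀
  set l₀ := ((Jᶜ.erase b).orderIsoOfFin hJb').symm ⟨d, hdJb⟩ with hl₀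
  set A : Matrix (Fin (m+2)) (Fin (m+2)) R :=
    Matrix.of (fun x y => M (Iᶜ.orderEmbOfFin hIc x) (Jᶜ.orderEmbOfFin hJc y)) with hA
  -- enumeration facts
  have hEa : ∀ x : Fin (m+1), (Iᶜ.erase a).orderEmbOfFin hIa' x
      = Iᶜ.orderEmbOfFin hIc (pa.succAbove x) := fun x => orderEmbOfFin_erase hIc haI hIa' x
  have hEc : ∀ x : Fin (m+1), (Iᶜ.erase c).orderEmbOfFin hIc' x
      = Iᶜ.orderEmbOfFin hIc (pc.succAbove x) := fun x => orderEmbOfFin_erase hIc hcI hIc' x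
  have hEb : ∀ x : Fin (m+1), (Jᶜ.erase b).orderEmbOfFin hJb' x
      = Jᶜ.orderEmbOfFin hJc (pb.succAbove x) := fun x => orderEmbOfFin_erase hJc hbJ hJb' x
  have hEd : ∀ x : Fin (m+1), (Jᶜ.erase d).orderEmbOfFin hJd' x
      = Jᶜ.orderEmbOfFin hJc (pd.succAbove x) := fun x => orderEmbOfFin_erase hJc hdJ hJd' x
  have hEac : ∀ x : Fin m, ((Iᶜ.erase a).erase c).orderEmbOfFin hIac' x
      = Iᶜ.orderEmbOfFin hIc (pa.succAbove (k₀.succAbove x)) := fun x => by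
    rw [orderEmbOfFin_erase hIa' hcIa hIac' x, ← hk₀, hEa]
  have hEbd : ∀ x : Fin m, ((Jᶜ.erase b).erase d).orderEmbOfFin hJbd' x
      = Jᶜ.orderEmbOfFin hJc (pb.succAbove (l₀.succAbove x)) := fun x => by
    rw [orderEmbOfFin_erase hJb' hdJb hJbd' x, ← hl₀, hEb]
  have hE2 : pa.succAbove k₀ = pc := by
    have h1 : (Iᶜ.erase a).orderEmbOfFin hIa' k₀ = c := by
      have h2 : (Iᶜ.erase a).orderIsoOfFin hIa' k₀ = ⟨c, hcIa⟩ :=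
        ((Iᶜ.erase a).orderIsoOfFin hIa').apply_symm_apply _
      rw [← Finset.coe_orderIsoOfFin_apply, h2]
    have h3 : Iᶜ.orderEmbOfFin hIc pc = c := by
      have h2 : Iᶜ.orderIsoOfFin hIc pc = ⟨c, hcI⟩ :=
        (Iᶜ.orderIsoOfFin hIc).apply_symm_apply _
      rw [← Finset.coe_orderIsoOfFin_apply, h2]
    apply (Iᶜ.orderEmbOfFin hIc).injective
    rw [← hEa, h1, h3]
  have hE2' : pb.succAbove l₀ = pd := by
    have h1 : (Jᶜ.erase b).orderEmbOfFin hJb' l₀ = d := by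
      have h2 : (Jᶜ.erase b).orderIsoOfFin hJb' l₀ = ⟨d, hdJb⟩ :=
        ((Jᶜ.erase b).orderIsoOfFin hJb').apply_symm_apply _
      rw [← Finset.coe_orderIsoOfFin_apply, h2]
    have h3 : Jᶜ.orderEmbOfFin hJc pd = d := by
      have h2 : Jᶜ.orderIsoOfFin hJc pd = ⟨d, hdJ⟩ :=
        (Jᶜ.orderIsoOfFin hJc).apply_symm_apply _
      rw [← Finset.coe_orderIsoOfFin_apply, h2]
    apply (Jᶜ.orderEmbOfFin hJc).injective
    rw [← hEb, h1, h3]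
  -- the six minors
  have m1 : minorDet M (insert a I) (insert b J)
      = Matrix.det (A.submatrix pa.succAbove pb.succAbove) := by
    rw [minorDet_eq M _ _ hIa1 hJb1]
    congr 1
    ext x y
    rw [Matrix.of_apply, Matrix.submatrix_apply, orderEmbOfFin_congr cIa hIa1,
      orderEmbOfFin_congr cJb hJb1, hA, Matrix.of_apply]
    congr 1
    · exact hEa x
    · exact hEb y
  have m2 : minorDet M (insert c I) (insert d J)
      = Matrix.det (A.submatrix pc.succAbove pd.succAbove) := by
    rw [minorDet_eq M _ _ hIc1 hJd1]
    congr 1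
    ext x y
    rw [Matrix.of_apply, Matrix.submatrix_apply, orderEmbOfFin_congr cIc hIc1,
      orderEmbOfFin_congr cJd hJd1, hA, Matrix.of_apply]
    congr 1
    · exact hEc x
    · exact hEd y
  have m3 : minorDet M (insert a I) (insert d J)
      = Matrix.det (A.submatrix pa.succAbove pd.succAbove) := by
    rw [minorDet_eq M _ _ hIa1 hJd1]
    congr 1
    ext x y
    rw [Matrix.of_apply, Matrix.submatrix_apply, orderEmbOfFin_congr cIa hIa1,
      orderEmbOfFin_congr cJd hJd1, hA, Matrix.of_apply]
    congr 1
    · exact hEa x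
    · exact hEd y
  have m4 : minorDet M (insert c I) (insert b J)
      = Matrix.det (A.submatrix pc.succAbove pb.succAbove) := by
    rw [minorDet_eq M _ _ hIc1 hJb1]
    congr 1
    ext x y
    rw [Matrix.of_apply, Matrix.submatrix_apply, orderEmbOfFin_congr cIc hIc1,
      orderEmbOfFin_congr cJb hJb1, hA, Matrix.of_apply]
    congr 1
    · exact hEc x
    · exact hEb y
  have m5 : minorDet M I J = Matrix.det A := by
    rw [minorDet_eq M _ _ hIc hJc]
  have m6 : minorDet M (insert c (insert a I)) (insert d (insert b J))
      = Matrix.det (A.submatrix (pa.succAbove ∘ k₀.succAbove) (pb.succAbove ∘ l₀.succAbove)) := by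
    rw [minorDet_eq M _ _ hIac1 hJbd1]
    congr 1
    ext x y
    rw [Matrix.of_apply, Matrix.submatrix_apply, orderEmbOfFin_congr cIac hIac1,
      orderEmbOfFin_congr cJbd hJbd1, hA, Matrix.of_apply]
    congr 1
    · exact hEac x
    · exact hEbd y
  rw [m1, m2, m3, m4, m5, m6]
  have hcore := dodgson_core A pa pb k₀ l₀
  rw [hE2, hE2'] at hcore
  rw [hcore]
  congr 2
  have hpac : pa < pc ↔ a < c := by
    rw [hpa, hpc, OrderIso.lt_iff_lt]
    exact Subtype.mk_lt_mk
  have hpbd : pb < pd ↔ b < d := by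
    rw [hpb, hpd, OrderIso.lt_iff_lt]
    exact Subtype.mk_lt_mk
  rw [hpac, hpbd]

end Aux

/-- first Dodgson identity for dual Dodgson polynomials:
`φ^{Ia,Jb}_S φ^{Ic,Jd}_S − φ^{Ia,Jd}_S φ^{Ic,Jb}_S = ± φ^{I,J}_S φ^{Iac,Jbd}_S`,
with sign `+` when `(a−c)(b−d) > 0` and `−` otherwise, where
`S = I ∪ J ∪ {a,b,c,d}`. -/
theorem statement8 (N : ℕ) (G : FeynGraph N) [Nonempty G.V] (hconn : G.IsConnected)
    (C : Fin G.loopNumber → Fin N → ℤ) (hC : G.IsSmallCycleBasis C)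
    (I J : Finset (Fin N)) (hIJ : I.card = J.card)
    (a b c d : Fin N) (ha : a ∉ I ∪ J) (hb : b ∉ I ∪ J) (hc : c ∉ I ∪ J)
    (hd : d ∉ I ∪ J) (hab : a ≠ b) (hac : a ≠ c) (had : a ≠ d) (hbc : b ≠ c)
    (hbd : b ≠ d) (hcd : c ≠ d) :
    G.dualDodgson C (insert a I) (insert b J) (I ∪ J ∪ {a, b, c, d}) *
        G.dualDodgson C (insert c I) (insert d J) (I ∪ J ∪ {a, b, c, d}) -
      G.dualDodgson C (insert a I) (insert d J) (I ∪ J ∪ {a, b, c, d}) *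
        G.dualDodgson C (insert c I) (insert b J) (I ∪ J ∪ {a, b, c, d}) =
      (if ((a.val : ℤ) - c.val) * ((b.val : ℤ) - d.val) > 0 then 1 else -1) *
        (G.dualDodgson C I J (I ∪ J ∪ {a, b, c, d}) *
          G.dualDodgson C (insert c (insert a I)) (insert d (insert b J))
            (I ∪ J ∪ {a, b, c, d})) := by
  classical
  have hιmono : StrictMono (Fin.castAdd (n := N) G.loopNumber) := Fin.strictMono_castAdd _
  have hιinj : Function.Injective (Fin.castAdd (n := N) G.loopNumber) := hιmono.injective
  obtain ⟨haI, haJ⟩ := Finset.notMem_union.mp ha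
  obtain ⟨hbI, hbJ⟩ := Finset.notMem_union.mp hb
  obtain ⟨hcI, hcJ⟩ := Finset.notMem_union.mp hc
  obtain ⟨hdI, hdJ⟩ := Finset.notMem_union.mp hd
  have himg : ∀ (x : Fin N) (S : Finset (Fin N)), x ∉ S →
      Fin.castAdd G.loopNumber x ∉ S.image (Fin.castAdd G.loopNumber) := by
    intro x S hx hmem
    obtain ⟨y, hy, hye⟩ := Finset.mem_image.mp hmem
    exact hx (hιinj hye ▸ hy)
  have haI' := himg a I haI
  have hbJ' := himg b J hbJ
  have hcI' := himg c I hcI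
  have hdJ' := himg d J hdJ
  have hsub : ({Fin.castAdd G.loopNumber a, Fin.castAdd G.loopNumber c} : Finset _)
      ⊆ (I.image (Fin.castAdd G.loopNumber))ᶜ := by
    intro x hx
    rcases Finset.mem_insert.mp hx with rfl | hx
    · exact Finset.mem_compl.mpr haI'
    · rw [Finset.mem_singleton.mp hx]
      exact Finset.mem_compl.mpr hcI'
  have h2le : 2 ≤ (I.image (Fin.castAdd G.loopNumber))ᶜ.card := by
    have h1 := Finset.card_le_card hsub
    rwa [Finset.card_pair (hιinj.ne hac)] at h1
  have hIc : (I.image (Fin.castAdd G.loopNumber))ᶜ.card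
      = ((I.image (Fin.castAdd G.loopNumber))ᶜ.card - 2) + 2 := by omega
  have hJc : (J.image (Fin.castAdd G.loopNumber))ᶜ.card
      = ((I.image (Fin.castAdd G.loopNumber))ᶜ.card - 2) + 2 := by
    rw [Finset.card_compl, Finset.card_image_of_injective _ hιinj, ← hIJ,
      ← Finset.card_image_of_injective _ hιinj, ← Finset.card_compl]
    exact hIc
  have key := minor_dodgson (G.LG C) (I.image (Fin.castAdd G.loopNumber))
    (J.image (Fin.castAdd G.loopNumber))
    (Fin.castAdd G.loopNumber a) (Fin.castAdd G.loopNumber b)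
    (Fin.castAdd G.loopNumber c) (Fin.castAdd G.loopNumber d)
    haI' hbJ' hcI' hdJ' (hιinj.ne hac) (hιinj.ne hbd) hIc hJc
  have hiff : ((((a.val : ℤ) - c.val) * ((b.val : ℤ) - d.val) > 0))
      ↔ (Fin.castAdd G.loopNumber a < Fin.castAdd G.loopNumber c
          ↔ Fin.castAdd G.loopNumber b < Fin.castAdd G.loopNumber d) := by
    rw [hιmono.lt_iff_lt, hιmono.lt_iff_lt, Fin.lt_def, Fin.lt_def, gt_iff_lt, mul_pos_iff]
    have h1 : a.val ≠ c.val := fun h => hac (Fin.ext h)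
    have h2 : b.val ≠ d.val := fun h => hbd (Fin.ext h)
    omega
  simp only [FeynGraph.dualDodgson, Finset.image_insert]
  rw [← map_mul, ← map_mul, ← map_sub, key, map_mul, map_mul]
  by_cases hcnd : (Fin.castAdd G.loopNumber a < Fin.castAdd G.loopNumber c
      ↔ Fin.castAdd G.loopNumber b < Fin.castAdd G.loopNumber d)
  · rw [if_pos hcnd, if_pos (hiff.mpr hcnd), map_one]
  · rw [if_neg hcnd, if_neg (fun h => hcnd (hiff.mp h)), map_neg, map_one]
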